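/- Let n ≥ k + ℓ, G an ℓ-subset and S an s-subset of [n] with |G ∩ S| = w < t, and F ⊆ binom([n],k) a family with |G ∩ F| ≥ t for all F ∈ F. Then |F_S| ≤ binom(ℓ-w, t-w) · binom(n - s - t + w, k - s - t + w), where F_S = {F ∈ F : S ⊆ F}. -/

import Mathlib

private lemma choose_mono_half (N : ℕ) : ∀ b a, a ≤ b → 2 * b ≤ N → N.choose a ≤ N.choose b := by
  intro b
  induction b with
  | zero =>
    intro a ha _
    have : a = 0 := Nat.le_zero.mp ha
    subst this; exact le_rfl
  | succ b ih =>
    intro a ha hb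
    rcases Nat.eq_or_lt_of_le ha with h | h
    · subst h; exact le_rfl
    · exact (ih a (by omega) (by omega)).trans
        (Nat.choose_le_succ_of_lt_half_left (by omega))

private lemma choose_mono_sum (N a b : ℕ) (hab : a ≤ b) (h : a + b ≤ N) :
    N.choose a ≤ N.choose b := by
  rcases le_or_gt (2 * b) N with hb | hb
  · exact choose_mono_half N b a hab hb
  · have hbN : b ≤ N := by omega
    rw [← Nat.choose_symm hbN]
    exact choose_mono_half N (N - b) a (by omega) (by omega)

/-- If every member of `F ⊆ binom([n],k)` meets the `ℓ`-set `G` in at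
least `t` elements, `S` is an `s`-set with `|G ∩ S| = w < t`, then the number of
members of `F` containing `S` is at most
`binom(ℓ-w, t-w) · binom(n-s-t+w, k-s-t+w)`. -/
theorem stmt_10 (n k ℓ t s w : ℕ) (hk : 0 < k) (hl : 0 < ℓ) (ht : 0 < t)
    (hs : 0 < s) (hn : k + ℓ ≤ n)
    (G S : Finset (Fin n)) (hG : G.card = ℓ) (hS : S.card = s)
    (hw : (G ∩ S).card = w) (hwt : w < t)
    (F : Finset (Finset (Fin n)))
    (hF : ∀ A ∈ F, A.card = k)
    (hmeet : ∀ A ∈ F, t ≤ (G ∩ A).card) :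
    (F.filter (fun A => S ⊆ A)).card ≤
      (ℓ - w).choose (t - w) * (n - s - t + w).choose (k - s - t + w) := by
  classical
  set m := t - w with hm
  set C := (n - s - t + w).choose (k - s - t + w) with hC
  set FS := F.filter (fun A => S ⊆ A) with hFSdef
  set P := (G \ S).powersetCard m with hP
  -- Every member of FS contains some T ∈ P
  have hsub : FS ⊆ P.biUnion (fun T => FS.filter (fun A => T ⊆ A)) := by
    intro A hA
    have hA' := Finset.mem_filter.mp hA
    have hcard : m ≤ ((G ∩ A) \ S).card := by
      have h1 : ((G ∩ A) \ S).card + ((G ∩ A) ∩ S).card = (G ∩ A).card :=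
        Finset.card_sdiff_add_card_inter _ _
      have h2 : ((G ∩ A) ∩ S).card ≤ w := by
        rw [← hw]
        exact Finset.card_le_card (by
          intro x hx
          simp only [Finset.mem_inter] at hx ⊢
          exact ⟨hx.1.1, hx.2⟩)
      have h3 := hmeet A hA'.1
      omega
    obtain ⟨T, hT, hTcard⟩ := Finset.exists_subset_card_eq hcard
    refine Finset.mem_biUnion.mpr ⟨T, ?_, ?_⟩
    · refine Finset.mem_powersetCard.mpr ⟨?_, hTcard⟩
      intro x hx
      have := hT hx
      simp only [Finset.mem_sdiff, Finset.mem_inter] at this ⊢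
      exact ⟨this.1.1, this.2⟩
    · refine Finset.mem_filter.mpr ⟨hA, ?_⟩
      intro x hx
      have := hT hx
      simp only [Finset.mem_sdiff, Finset.mem_inter] at this
      exact this.1.2
  -- bound each fiber
  have hfiber : ∀ T ∈ P, (FS.filter (fun A => T ⊆ A)).card ≤ C := by
    intro T hTP
    obtain ⟨hTsub, hTcard⟩ := Finset.mem_powersetCard.mp hTP
    rcases (FS.filter (fun A => T ⊆ A)).eq_empty_or_nonempty with he | ⟨A₀, hA₀⟩
    · rw [he]; simp
    · have hA₀' := Finset.mem_filter.mp hA₀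
      have hA₀'' := Finset.mem_filter.mp hA₀'.1
      have hA₀F : A₀ ∈ F := hA₀''.1
      have hSA₀ : S ⊆ A₀ := hA₀''.2
      have hTA₀ : T ⊆ A₀ := hA₀'.2
      have hA₀card : A₀.card = k := hF A₀ hA₀F
      -- disjointness of S and T
      have hdisj : Disjoint S T :=
        (Finset.disjoint_of_subset_right hTsub Finset.disjoint_sdiff).symm.symm
      have hdisj' : Disjoint S T := by
        have : Disjoint (G \ S) S := Finset.sdiff_disjoint
        exact (Finset.disjoint_of_subset_left hTsub this).symm
      have hSTcard : (S ∪ T).card = s + m := by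
        rw [Finset.card_union_of_disjoint hdisj', hS, hTcard]
      have hsmk : s + m ≤ k := by
        rw [← hSTcard, ← hA₀card]
        exact Finset.card_le_card (Finset.union_subset hSA₀ hTA₀)
      have htl : t ≤ ℓ := by
        have := hmeet A₀ hA₀F
        have h2 : (G ∩ A₀).card ≤ ℓ := by
          rw [← hG]; exact Finset.card_le_card Finset.inter_subset_left
        omega
      have hsk : s ≤ k := by omega
      have hstn : s + t ≤ n := by omega
      -- injection A ↦ A \ (S ∪ T)
      have hinj : (FS.filter (fun A => T ⊆ A)).card ≤
          (((S ∪ T)ᶜ).powersetCard (k - (s + m))).card := by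
        apply Finset.card_le_card_of_injOn (fun A => A \ (S ∪ T))
        · intro A hA
          have hA' := Finset.mem_filter.mp hA
          have hA'' := Finset.mem_filter.mp hA'.1
          have hST : S ∪ T ⊆ A := Finset.union_subset hA''.2 hA'.2
          refine Finset.mem_powersetCard.mpr ⟨?_, ?_⟩
          · intro x hx
            simp only [Finset.mem_sdiff] at hx
            simpa using hx.2
          · rw [Finset.card_sdiff_of_subset hST, hF A hA''.1, hSTcard]
        · intro A hA B hB hAB
          have hA' := Finset.mem_filter.mp hA
          have hA'' := Finset.mem_filter.mp hA'.1
          have hSTA : S ∪ T ⊆ A := Finset.union_subset hA''.2 hA'.2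
          have hB' := Finset.mem_filter.mp hB
          have hB'' := Finset.mem_filter.mp hB'.1
          have hSTB : S ∪ T ⊆ B := Finset.union_subset hB''.2 hB'.2
          calc A = A \ (S ∪ T) ∪ (S ∪ T) := (Finset.sdiff_union_of_subset hSTA).symm
            _ = B \ (S ∪ T) ∪ (S ∪ T) := by rw [show A \ (S ∪ T) = B \ (S ∪ T) from hAB]
            _ = B := Finset.sdiff_union_of_subset hSTB
      have hcompl : ((S ∪ T)ᶜ : Finset (Fin n)).card = n - (s + m) := by
        rw [Finset.card_compl, hSTcard, Fintype.card_fin]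
      rw [Finset.card_powersetCard, hcompl] at hinj
      refine hinj.trans ?_
      have hNeq : n - (s + m) = n - s - t + w := by omega
      rw [hNeq, hC]
      rcases le_or_gt (s + t) k with hkst | hkst
      · have : k - (s + m) = k - s - t + w := by omega
        rw [this]
      · exact choose_mono_sum _ _ _ (by omega) (by omega)
  calc FS.card ≤ (P.biUnion (fun T => FS.filter (fun A => T ⊆ A))).card :=
        Finset.card_le_card hsub
    _ ≤ ∑ T ∈ P, (FS.filter (fun A => T ⊆ A)).card := Finset.card_biUnion_le
    _ ≤ ∑ _T ∈ P, C := Finset.sum_le_sum hfiber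
    _ = P.card * C := by rw [Finset.sum_const, smul_eq_mul]
    _ = (ℓ - w).choose (t - w) * C := by
        rw [hP, Finset.card_powersetCard]
        congr 2
        have := Finset.card_sdiff_add_card_inter G S
        omega
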